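/- arXiv:quant-ph/0401026 — 3 statements merged into one kernel-verified Lean document; each statement's English description precedes it below -/
import Mathlib

section
/- Let Φ : M_d(ℂ) → M_{d'}(ℂ) be a completely positive linear map. Then the supremum of ‖Φ(A)‖₂ / ‖A‖₂ over all nonzero Hermitian matrices A equals the supremum over all nonzero complex matrices A; that is, ‖Φ‖_{2→2}^R = ‖Φ‖_{2→2}. -/
open scoped Kronecker ComplexOrder
open Matrix

/-- Frobenius (Hilbert–Schmidt) norm ‖A‖₂ = (Tr A†A)^{1/2}. -/
noncomputable def frob {m n : Type*} [Fintype m] [Fintype n] (A : Matrix m n ℂ) : ℝ :=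
  Real.sqrt ((Aᴴ * A).trace.re)

/-- ‖Φ‖_{2→2} = sup_{A ≠ 0} ‖Φ(A)‖₂ / ‖A‖₂. -/
noncomputable def norm22 {m m' : Type*} [Fintype m] [Fintype m']
    (Φ : Matrix m m ℂ →ₗ[ℂ] Matrix m' m' ℂ) : ℝ :=
  sSup {r | ∃ A, A ≠ 0 ∧ r = frob (Φ A) / frob A}

/-- Choi matrix ∑_{j,k} E_{jk} ⊗ Φ(E_{jk}) of a linear map between matrix algebras. -/
noncomputable def choi {m m' : Type*} [Fintype m] [DecidableEq m] [Fintype m']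
    (Φ : Matrix m m ℂ →ₗ[ℂ] Matrix m' m' ℂ) : Matrix (m × m') (m × m') ℂ :=
  ∑ j, ∑ k, (single j k (1 : ℂ)) ⊗ₖ Φ (single j k 1)

/-- A linear map between matrix algebras is completely positive iff its Choi matrix is
positive semidefinite. -/
def IsCPMap {m m' : Type*} [Fintype m] [DecidableEq m] [Fintype m']
    (Φ : Matrix m m ℂ →ₗ[ℂ] Matrix m' m' ℂ) : Prop :=
  (choi Φ).PosSemidef

/-- Schatten p-norm ‖A‖_p = (Tr |A|^p)^{1/p}, computed through the singular values of A,
i.e. the square roots of the eigenvalues of A†A. -/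
noncomputable def schatten {m n : Type*} [Fintype m] [Fintype n] [DecidableEq n]
    (p : ℝ) (A : Matrix m n ℂ) : ℝ :=
  (∑ i, Real.sqrt ((isHermitian_conjTranspose_mul_self A).eigenvalues i) ^ p) ^ (1 / p)

/-- ν₂(Φ) = sup { ‖Φ(ρ)‖₂ : ρ positive semidefinite, Tr ρ = 1 }. -/
noncomputable def nu2 {m m' : Type*} [Fintype m] [Fintype m']
    (Φ : Matrix m m ℂ →ₗ[ℂ] Matrix m' m' ℂ) : ℝ :=
  sSup {r | ∃ ρ : Matrix m m ℂ, ρ.PosSemidef ∧ ρ.trace = 1 ∧ r = frob (Φ ρ)}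

/-- ν_p(Φ) = sup { ‖Φ(ρ)‖_p : ρ positive semidefinite, Tr ρ = 1 }. -/
noncomputable def nup (p : ℝ) {m m' : Type*} [Fintype m] [Fintype m'] [DecidableEq m']
    (Φ : Matrix m m ℂ →ₗ[ℂ] Matrix m' m' ℂ) : ℝ :=
  sSup {r | ∃ ρ : Matrix m m ℂ, ρ.PosSemidef ∧ ρ.trace = 1 ∧ r = schatten p (Φ ρ)}

/-- The Pauli matrices σ₁, σ₂, σ₃ (indexed by `Fin 3`). -/
noncomputable def pauli : Fin 3 → Matrix (Fin 2) (Fin 2) ℂ :=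
  ![!![0, 1; 1, 0], !![0, -Complex.I; Complex.I, 0], !![1, 0; 0, -1]]

/-! ### Auxiliary lemmas -/

attribute [local instance] Matrix.frobeniusNormedAddCommGroup Matrix.frobeniusNormedSpace

lemma trace_re_eq {m n : Type*} [Fintype m] [Fintype n] (A : Matrix m n ℂ) :
    (Aᴴ * A).trace.re = ∑ j, ∑ i, ‖A i j‖ ^ 2 := by
  simp only [Matrix.trace, Matrix.diag, Matrix.mul_apply, Matrix.conjTranspose_apply]
  rw [Complex.re_sum]
  refine Finset.sum_congr rfl fun j _ => ?_
  rw [Complex.re_sum]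
  refine Finset.sum_congr rfl fun i _ => ?_
  rw [Complex.star_def, ← Complex.normSq_eq_conj_mul_self]
  simp [Complex.normSq_eq_norm_sq, ← Complex.ofReal_pow]

lemma frob_eq_norm {m n : Type*} [Fintype m] [Fintype n] (A : Matrix m n ℂ) :
    frob A = ‖A‖ := by
  rw [frob, Matrix.frobenius_norm_def, trace_re_eq, Real.sqrt_eq_rpow, Finset.sum_comm]
  norm_num [Real.rpow_natCast]

lemma frob_nonneg {m n : Type*} [Fintype m] [Fintype n] (A : Matrix m n ℂ) :
    0 ≤ frob A := Real.sqrt_nonneg _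

lemma frob_sq {m n : Type*} [Fintype m] [Fintype n] (A : Matrix m n ℂ) :
    frob A ^ 2 = (Aᴴ * A).trace.re := by
  rw [frob, Real.sq_sqrt]
  rw [trace_re_eq]
  positivity

lemma choi_apply {m m' : Type*} [Fintype m] [DecidableEq m] [Fintype m']
    (Φ : Matrix m m ℂ →ₗ[ℂ] Matrix m' m' ℂ) (j k : m) (a b : m') :
    choi Φ (j, a) (k, b) = Φ (single j k 1) a b := by
  simp only [choi, Matrix.sum_apply, Matrix.kroneckerMap_apply, Matrix.single,
    Matrix.of_apply]
  simp [Finset.sum_ite_eq, ite_and]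

lemma stdBasisMatrix_conjT {m : Type*} [DecidableEq m] (j k : m) (c : ℂ) :
    (single j k c)ᴴ = single k j (star c) := by
  ext a b
  simp only [Matrix.conjTranspose_apply, Matrix.single, Matrix.of_apply]
  split_ifs with h1 h2 h2 <;> simp_all [and_comm]

lemma phi_adj {m m' : Type*} [Fintype m] [DecidableEq m] [Fintype m']
    (Φ : Matrix m m ℂ →ₗ[ℂ] Matrix m' m' ℂ) (h : (choi Φ).IsHermitian)
    (X : Matrix m m ℂ) : Φ Xᴴ = (Φ X)ᴴ := by
  have hE : ∀ j k : m, Φ (single k j 1) = (Φ (single j k 1))ᴴ := by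
    intro j k
    ext a b
    calc Φ (single k j 1) a b = choi Φ (k, a) (j, b) := (choi_apply Φ k j a b).symm
      _ = star (choi Φ (j, b) (k, a)) := by
          conv_lhs => rw [← h]
          rfl
      _ = star (Φ (single j k 1) b a) := by rw [choi_apply]
      _ = (Φ (single j k 1))ᴴ a b := rfl
  have key : ∀ (j k : m) (c : ℂ),
      Φ (single j k c)ᴴ = (Φ (single j k c))ᴴ := by
    intro j k c
    have h1 : single j k c = c • single j k (1 : ℂ) := by simp
    rw [stdBasisMatrix_conjT, show single k j (star c) = star c • single k j (1:ℂ)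
      by simp, h1, _root_.map_smul, _root_.map_smul, Matrix.conjTranspose_smul, hE j k]
  conv_lhs => rw [Matrix.matrix_eq_sum_single X]
  conv_rhs => rw [Matrix.matrix_eq_sum_single X]
  rw [Matrix.conjTranspose_sum, map_sum]
  simp only [Matrix.conjTranspose_sum, map_sum]
  exact Finset.sum_congr rfl fun j _ => Finset.sum_congr rfl fun k _ => key j k _

lemma pythag {n : Type*} [Fintype n] (B C : Matrix n n ℂ) (hB : Bᴴ = B) (hC : Cᴴ = C) :
    ((B + Complex.I • C)ᴴ * (B + Complex.I • C)).trace.re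
      = (Bᴴ * B).trace.re + (Cᴴ * C).trace.re := by
  have expand : (B + Complex.I • C)ᴴ * (B + Complex.I • C)
      = Bᴴ * B + Cᴴ * C + Complex.I • (B * C) - Complex.I • (C * B) := by
    rw [Matrix.conjTranspose_add, Matrix.conjTranspose_smul, hB, hC]
    simp only [Complex.star_def, Complex.conj_I, Matrix.add_mul, Matrix.mul_add,
      Matrix.smul_mul, Matrix.mul_smul, smul_smul, neg_mul, Complex.I_mul_I, neg_neg,
      neg_smul, one_smul, hB, hC]
    match_scalars <;> simp [Complex.I_sq]
  rw [expand]
  simp only [Matrix.trace_sub, Matrix.trace_add, Matrix.trace_smul, Matrix.trace_mul_comm B C]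
  simp [Complex.add_re, Complex.sub_re]

/-- For a completely positive map Φ, the 2→2 norm restricted to Hermitian matrices equals
the unrestricted 2→2 norm: ‖Φ‖_{2→2}^R = ‖Φ‖_{2→2}. -/
theorem stmt2 {d d' : ℕ}
    (Φ : Matrix (Fin d) (Fin d) ℂ →ₗ[ℂ] Matrix (Fin d') (Fin d') ℂ)
    (hΦ : IsCPMap Φ) :
    sSup {r | ∃ A : Matrix (Fin d) (Fin d) ℂ, A.IsHermitian ∧ A ≠ 0 ∧ r = frob (Φ A) / frob A}
      = norm22 Φ := by
  classical
  rw [norm22]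
  rcases Nat.eq_zero_or_pos d with hd | hd
  · subst hd
    have h0 : ∀ A : Matrix (Fin 0) (Fin 0) ℂ, A = 0 := fun A => Subsingleton.elim _ _
    congr 1
    ext r
    simp only [Set.mem_setOf_eq]
    constructor
    · rintro ⟨A, _, hA, _⟩; exact absurd (h0 A) hA
    · rintro ⟨A, hA, _⟩; exact absurd (h0 A) hA
  · haveI : Nonempty (Fin d) := ⟨⟨0, hd⟩⟩
    set S := {r | ∃ A : Matrix (Fin d) (Fin d) ℂ, A.IsHermitian ∧ A ≠ 0 ∧
      r = frob (Φ A) / frob A} with hS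
    set T := {r | ∃ A : Matrix (Fin d) (Fin d) ℂ, A ≠ 0 ∧ r = frob (Φ A) / frob A} with hT
    have hone : (1 : Matrix (Fin d) (Fin d) ℂ) ≠ 0 := by
      intro h
      have := congrFun (congrFun h (Classical.arbitrary _)) (Classical.arbitrary _)
      simp [Matrix.one_apply] at this
    have frob_pos : ∀ (A : Matrix (Fin d) (Fin d) ℂ), A ≠ 0 → 0 < frob A := by
      intro A hA
      rw [frob_eq_norm]
      exact norm_pos_iff.mpr hA
    -- boundedness
    set Φ' := LinearMap.toContinuousLinearMap Φ with hΦ'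
    have hTbdd : BddAbove T := by
      refine ⟨@Norm.norm _ ContinuousLinearMap.hasOpNorm Φ', ?_⟩
      rintro r ⟨A, hA, rfl⟩
      rw [div_le_iff₀ (frob_pos A hA), frob_eq_norm, frob_eq_norm]
      exact Φ'.le_opNorm A
    have hSsub : S ⊆ T := by
      rintro r ⟨A, _, hA, rfl⟩
      exact ⟨A, hA, rfl⟩
    have hSbdd : BddAbove S := hTbdd.mono hSsub
    have hSne : S.Nonempty := ⟨_, 1, Matrix.isHermitian_one, hone, rfl⟩
    have hTne : T.Nonempty := ⟨_, 1, hone, rfl⟩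
    refine le_antisymm (csSup_le_csSup hTbdd hSne hSsub) (csSup_le hTne ?_)
    rintro r ⟨A, hA, rfl⟩
    set c := sSup S with hc
    have hc0 : 0 ≤ c := by
      refine le_trans ?_ (le_csSup hSbdd ⟨1, Matrix.isHermitian_one, hone, rfl⟩)
      exact div_nonneg (frob_nonneg _) (frob_nonneg _)
    have key : ∀ B : Matrix (Fin d) (Fin d) ℂ, Bᴴ = B → frob (Φ B) ≤ c * frob B := by
      intro B hB
      rcases eq_or_ne B 0 with rfl | hBne
      · simp [frob, map_zero]
      · have hmem : frob (Φ B) / frob B ∈ S := ⟨B, hB, hBne, rfl⟩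
        have := le_csSup hSbdd hmem
        rw [div_le_iff₀ (frob_pos B hBne)] at this
        linarith
    set H : Matrix (Fin d) (Fin d) ℂ := (2 : ℂ)⁻¹ • (A + Aᴴ) with hHdef
    set K : Matrix (Fin d) (Fin d) ℂ := (2 : ℂ)⁻¹ • (Complex.I • (Aᴴ - A)) with hKdef
    have hH : Hᴴ = H := by
      rw [hHdef, Matrix.conjTranspose_smul, Matrix.conjTranspose_add,
        Matrix.conjTranspose_conjTranspose]
      congr 1
      · simp [Complex.star_def, map_inv₀]
      · exact add_comm _ _
    have hK : Kᴴ = K := by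
      rw [hKdef, Matrix.conjTranspose_smul, Matrix.conjTranspose_smul,
        Matrix.conjTranspose_sub, Matrix.conjTranspose_conjTranspose]
      rw [show (star Complex.I) = -Complex.I by simp [Complex.star_def, Complex.conj_I]]
      rw [show star ((2:ℂ)⁻¹) = (2:ℂ)⁻¹ by simp [Complex.star_def, map_inv₀]]
      module
    have hAeq : A = H + Complex.I • K := by
      rw [hHdef, hKdef]
      match_scalars <;> field_simp <;> ring_nf <;> simp [Complex.I_sq] <;> norm_num
    -- Pythagoras for A
    have hA2 : frob A ^ 2 = frob H ^ 2 + frob K ^ 2 := by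
      rw [frob_sq, frob_sq, frob_sq]
      conv_lhs => rw [hAeq]
      rw [pythag H K hH hK]
    have hΦH : (Φ H)ᴴ = Φ H := by rw [← phi_adj Φ hΦ.1, hH]
    have hΦK : (Φ K)ᴴ = Φ K := by rw [← phi_adj Φ hΦ.1, hK]
    have hΦAeq : Φ A = Φ H + Complex.I • Φ K := by
      conv_lhs => rw [hAeq]
      simp only [map_add, _root_.map_smul]
    have hΦA2 : frob (Φ A) ^ 2 = frob (Φ H) ^ 2 + frob (Φ K) ^ 2 := by
      rw [frob_sq, frob_sq, frob_sq, hΦAeq, pythag _ _ hΦH hΦK]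
    have hsq : frob (Φ A) ^ 2 ≤ (c * frob A) ^ 2 := by
      rw [hΦA2]
      have h1 : frob (Φ H) ^ 2 ≤ (c * frob H) ^ 2 :=
        pow_le_pow_left₀ (frob_nonneg _) (key H hH) 2
      have h2 : frob (Φ K) ^ 2 ≤ (c * frob K) ^ 2 :=
        pow_le_pow_left₀ (frob_nonneg _) (key K hK) 2
      calc frob (Φ H) ^ 2 + frob (Φ K) ^ 2 ≤ (c * frob H) ^ 2 + (c * frob K) ^ 2 :=
            add_le_add h1 h2
        _ = c ^ 2 * (frob H ^ 2 + frob K ^ 2) := by ring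
        _ = (c * frob A) ^ 2 := by rw [← hA2]; ring
    have hle : frob (Φ A) ≤ c * frob A := by
      have h := Real.sqrt_le_sqrt hsq
      rwa [Real.sqrt_sq (frob_nonneg _), Real.sqrt_sq (mul_nonneg hc0 (frob_nonneg _))] at h
    rw [div_le_iff₀ (frob_pos A hA)]
    exact hle
end

section
/- Let w, u ∈ ℝ³ and let A = I + ∑_k (w_k + i u_k) σ_k ∈ M₂(ℂ). Then (Tr|A|)² = 2( 1 + |w|² + |u|² + √( (1 − |w|² + |u|²)² + 4 (u·w)² ) ). -/
open scoped Kronecker ComplexOrder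
open Matrix

lemma trace_eq_sum_eig {n : Type*} [Fintype n] [DecidableEq n] {A : Matrix n n ℂ}
    (hA : A.IsHermitian) : A.trace = ∑ i, (hA.eigenvalues i : ℂ) := by
  conv_lhs => rw [hA.spectral_theorem]
  rw [Unitary.conjStarAlgAut_apply, trace_mul_cycle]
  simp [Matrix.trace_diagonal]

/-- For A = I + ∑_k (w_k + i u_k)σ_k one has
(Tr|A|)² = 2(1 + |w|² + |u|² + √((1 − |w|² + |u|²)² + 4(u·w)²)). -/
theorem stmt14 (w u : Fin 3 → ℝ) :
    schatten 1 (1 + ∑ k, ((w k : ℂ) + Complex.I * (u k : ℂ)) • pauli k) ^ 2 =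
      2 * (1 + (∑ k, w k ^ 2) + (∑ k, u k ^ 2) +
        Real.sqrt ((1 - (∑ k, w k ^ 2) + (∑ k, u k ^ 2)) ^ 2 +
          4 * (∑ k, u k * w k) ^ 2)) := by
  set B := 1 + ∑ k, ((w k : ℂ) + Complex.I * (u k : ℂ)) • pauli k with hBdef
  have hBmat : B = !![1 + ((w 2:ℂ) + Complex.I * u 2),
      ((w 0:ℂ) + Complex.I * u 0) - Complex.I * ((w 1:ℂ) + Complex.I * u 1);
      ((w 0:ℂ) + Complex.I * u 0) + Complex.I * ((w 1:ℂ) + Complex.I * u 1),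
      1 - ((w 2:ℂ) + Complex.I * u 2)] := by
    rw [hBdef]
    ext i j
    fin_cases i <;> fin_cases j <;>
      simp [pauli, Fin.sum_univ_three, Matrix.one_apply] <;> ring
  have hB := isHermitian_conjTranspose_mul_self B
  have hpos := posSemidef_conjTranspose_mul_self B
  have htr : (Bᴴ * B).trace =
      ((2 * (1 + (∑ k, w k ^ 2) + (∑ k, u k ^ 2)) : ℝ) : ℂ) := by
    rw [hBmat]
    apply Complex.ext <;>
      simp [Matrix.trace_fin_two, Matrix.mul_apply, Fin.sum_univ_two, Fin.sum_univ_three,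
        Matrix.conjTranspose_apply, Complex.add_re, Complex.mul_re, Complex.mul_im,
        ← Complex.ofReal_pow, ← Complex.ofReal_mul] <;> ring
  have hdet : (Bᴴ * B).det =
      (((1 - (∑ k, w k ^ 2) + (∑ k, u k ^ 2)) ^ 2 + 4 * (∑ k, u k * w k) ^ 2 : ℝ) : ℂ) := by
    rw [det_mul, det_conjTranspose, hBmat]
    apply Complex.ext <;>
      simp [Matrix.det_fin_two, Fin.sum_univ_three, Complex.mul_re, Complex.mul_im,
        ← Complex.ofReal_pow, ← Complex.ofReal_mul] <;> ring
  have h0 : 0 ≤ hB.eigenvalues 0 := hpos.eigenvalues_nonneg 0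
  have h1 : 0 ≤ hB.eigenvalues 1 := hpos.eigenvalues_nonneg 1
  have e0 : hB.eigenvalues 0 + hB.eigenvalues 1 = 2 * (1 + (∑ k, w k ^ 2) + (∑ k, u k ^ 2)) := by
    have h := (trace_eq_sum_eig hB).symm.trans htr
    rw [Fin.sum_univ_two] at h
    exact_mod_cast h
  have e1 : hB.eigenvalues 0 * hB.eigenvalues 1 =
      (1 - (∑ k, w k ^ 2) + (∑ k, u k ^ 2)) ^ 2 + 4 * (∑ k, u k * w k) ^ 2 := by
    have h := hB.det_eq_prod_eigenvalues.symm.trans hdet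
    rw [Fin.prod_univ_two] at h
    simpa [Complex.ext_iff, ← Complex.ofReal_sum, ← Complex.ofReal_pow, ← Complex.ofReal_mul,
      ← Complex.ofReal_sub, ← Complex.ofReal_add, ← Complex.ofReal_one] using h
  have hsch : schatten 1 B =
      Real.sqrt (hB.eigenvalues 0) + Real.sqrt (hB.eigenvalues 1) := by
    simp [schatten, Fin.sum_univ_two]
  have key : Real.sqrt (hB.eigenvalues 0) * Real.sqrt (hB.eigenvalues 1)
      = Real.sqrt ((1 - (∑ k, w k ^ 2) + (∑ k, u k ^ 2)) ^ 2 + 4 * (∑ k, u k * w k) ^ 2) := by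
    rw [← Real.sqrt_mul h0, e1]
  rw [hsch, add_sq, Real.sq_sqrt h0, Real.sq_sqrt h1, mul_assoc, key]
  linarith [e0]
end

section
/- Let Λ : M_d(ℂ) → M_d(ℂ) be a completely positive linear map satisfying Tr Λ(A)† Λ(B) = Tr A† B for all A, B ∈ M_d(ℂ) (i.e. Λ is a unitary operator on M_d(ℂ) with the Hilbert–Schmidt inner product). Then there exists a unitary matrix U ∈ M_d(ℂ) such that Λ(A) = U† A U for all A. -/
open scoped Kronecker ComplexOrder
open Matrix

private lemma sum_mul_star_eq_zero' {α : Type*} [Fintype α] {f : α → ℂ}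
    (h : ∑ a, f a * star (f a) = 0) (a : α) : f a = 0 := by
  have h' : ∑ a, Complex.normSq (f a) = 0 := by
    have h2 : ((∑ a, Complex.normSq (f a) : ℝ) : ℂ) = 0 := by
      push_cast
      simpa [Complex.mul_conj] using h
    exact_mod_cast h2
  have h3 := (Finset.sum_eq_zero_iff_of_nonneg
    (fun i _ => Complex.normSq_nonneg (f i))).mp h' a (Finset.mem_univ a)
  exact Complex.normSq_eq_zero.mp h3

private lemma mul_star_self_eq_zero' {z : ℂ} (h : z * star z = 0) : z = 0 := by
  have : (Complex.normSq z : ℂ) = 0 := by rw [← Complex.mul_conj]; exact h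
  exact Complex.normSq_eq_zero.mp (by exact_mod_cast this)

private lemma mul_conjT_scalar' {n : Type*} [Fintype n] [DecidableEq n]
    {A : Matrix n n ℂ} {γ : ℂ} (h : Aᴴ * A = γ • 1) : A * Aᴴ = γ • 1 := by
  by_cases hγ : γ = 0
  · subst hγ; simp only [zero_smul] at h ⊢
    rw [Matrix.conjTranspose_mul_self_eq_zero.mp h]; simp
  · have h1 : (γ⁻¹ • Aᴴ) * A = 1 := by
      rw [Matrix.smul_mul, h, smul_smul, inv_mul_cancel₀ hγ, one_smul]
    have h2 : A * (γ⁻¹ • Aᴴ) = 1 := mul_eq_one_comm.mpr h1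
    calc A * Aᴴ = γ • (A * (γ⁻¹ • Aᴴ)) := by
          rw [Matrix.mul_smul, smul_smul, mul_inv_cancel₀ hγ, one_smul]
      _ = γ • 1 := by rw [h2]

private lemma trace_conj_aux' {n : Type*} [Fintype n] (P A Q B : Matrix n n ℂ) :
    ((P * A * Pᴴ)ᴴ * (Q * B * Qᴴ)).trace = (Aᴴ * (Pᴴ * Q) * B * (Qᴴ * P)).trace := by
  simp only [conjTranspose_mul, conjTranspose_conjTranspose, Matrix.mul_assoc]
  rw [Matrix.trace_mul_comm]
  simp only [Matrix.mul_assoc]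

private lemma trace_basis_aux' {n : Type*} [Fintype n] [DecidableEq n] (p q p' q' : n)
    (M M' : Matrix n n ℂ) :
    ((single p q (1:ℂ))ᴴ * M * single p' q' 1 * M'ᴴ).trace
      = M p p' * star (M' q q') := by
  simp [Matrix.trace, Matrix.diag, Matrix.mul_apply, Matrix.single,
    Matrix.conjTranspose_apply, ite_and, ite_mul, mul_ite, mul_zero, zero_mul,
    Finset.sum_ite_eq, Finset.sum_ite_eq', mul_comm, apply_ite (starRingEnd ℂ),
    _root_.map_one, _root_.map_zero]

private lemma trace_basis_aux2' {n : Type*} [Fintype n] [DecidableEq n] (p q p' q' : n) :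
    ((single p q (1:ℂ))ᴴ * single p' q' 1).trace
      = if p = p' ∧ q = q' then 1 else 0 := by
  simp [Matrix.trace, Matrix.diag, Matrix.mul_apply, Matrix.single,
    Matrix.conjTranspose_apply, ite_and, ite_mul, mul_ite, mul_zero, zero_mul,
    Finset.sum_ite_eq, Finset.sum_ite_eq', apply_ite (starRingEnd ℂ),
    _root_.map_one, _root_.map_zero]


/-- A completely positive map Λ on M_d(ℂ) that is unitary for the Hilbert–Schmidt inner
product (Tr Λ(A)†Λ(B) = Tr A†B for all A, B) is conjugation by a unitary:
Λ(A) = U† A U for some unitary U. -/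
theorem stmt18 {d : ℕ}
    (Λ : Matrix (Fin d) (Fin d) ℂ →ₗ[ℂ] Matrix (Fin d) (Fin d) ℂ)
    (hCP : IsCPMap Λ)
    (hiso : ∀ A B : Matrix (Fin d) (Fin d) ℂ, ((Λ A)ᴴ * Λ B).trace = (Aᴴ * B).trace) :
    ∃ U : Matrix (Fin d) (Fin d) ℂ, U ∈ Matrix.unitaryGroup (Fin d) ℂ ∧
      ∀ A : Matrix (Fin d) (Fin d) ℂ, Λ A = Uᴴ * A * U := by
  rcases Nat.eq_zero_or_pos d with hd | hd
  · subst hd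
    refine ⟨1, one_mem _, fun A => ?_⟩
    ext i j
    exact i.elim0
  have hd0 : (d : ℂ) ≠ 0 := Nat.cast_ne_zero.mpr hd.ne'
  set p₀ : Fin d := ⟨0, hd⟩ with hp₀
  obtain ⟨B, hB⟩ : ∃ B : Matrix (Fin d × Fin d) (Fin d × Fin d) ℂ, choi Λ = Bᴴ * B := by
    open scoped MatrixOrder in
    exact CStarAlgebra.nonneg_iff_eq_star_mul_self.mp hCP.nonneg
  set W : (Fin d × Fin d) → Matrix (Fin d) (Fin d) ℂ :=
    fun i => Matrix.of (fun r j => star (B i (j, r))) with hWdef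
  -- Choi matrix entries give the values of Λ on matrix units
  have hchoi : ∀ j k r s : Fin d, Λ (single j k 1) r s = choi Λ (j,r) (k,s) := by
    intro j k r s
    simp [choi, Matrix.sum_apply, Matrix.kroneckerMap_apply, Matrix.single,
      ite_mul, one_mul, zero_mul, ite_and, Finset.sum_ite_eq, Finset.sum_ite_eq']
  -- Kraus form on matrix units
  have hE : ∀ j k : Fin d,
      Λ (single j k 1) = ∑ i, W i * single j k 1 * (W i)ᴴ := by
    intro j k
    ext r s
    rw [hchoi, hB]
    simp [Matrix.mul_apply, Matrix.sum_apply, Matrix.conjTranspose_apply, hWdef,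
      Matrix.single, ite_and, ite_mul, mul_ite, mul_zero, zero_mul,
      Finset.sum_ite_eq, Finset.sum_ite_eq']
  -- Kraus form in general
  have hK : ∀ A, Λ A = ∑ i, W i * A * (W i)ᴴ := by
    intro A
    have step1 : Λ A = ∑ j, ∑ k, A j k • Λ (single j k 1) := by
      conv_lhs => rw [matrix_eq_sum_single A]
      rw [map_sum]
      refine Finset.sum_congr rfl fun j _ => ?_
      rw [map_sum]
      refine Finset.sum_congr rfl fun k _ => ?_
      rw [show single j k (A j k) = A j k • single j k (1:ℂ) by
            rw [smul_single, smul_eq_mul, mul_one], _root_.map_smul]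
    have step2 : ∀ i : Fin d × Fin d,
        W i * A * (W i)ᴴ = ∑ j, ∑ k, A j k • (W i * single j k 1 * (W i)ᴴ) := by
      intro i
      conv_lhs => rw [matrix_eq_sum_single A]
      simp only [Finset.mul_sum, Finset.sum_mul]
      refine Finset.sum_congr rfl fun j _ => Finset.sum_congr rfl fun k _ => ?_
      rw [show single j k (A j k) = A j k • single j k (1:ℂ) by
            rw [smul_single, smul_eq_mul, mul_one]]
      simp only [Matrix.mul_smul, Matrix.smul_mul]
    rw [step1]
    simp only [hE, Finset.smul_sum]
    rw [Finset.sum_congr rfl fun j (_ : j ∈ Finset.univ) => Finset.sum_comm, Finset.sum_comm]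
    exact Finset.sum_congr rfl fun i _ => (step2 i).symm
  -- the maps N i i' = (W i')ᴴ * W i
  set N : (Fin d × Fin d) → (Fin d × Fin d) → Matrix (Fin d) (Fin d) ℂ :=
    fun i i' => (W i')ᴴ * W i with hNdef
  have hisoK : ∀ A B₁ : Matrix (Fin d) (Fin d) ℂ,
      (∑ i, ∑ i', (Aᴴ * N i i' * B₁ * (N i i')ᴴ).trace) = (Aᴴ * B₁).trace := by
    intro A B₁
    rw [← hiso A B₁, hK A, hK B₁]
    rw [Matrix.conjTranspose_sum, Finset.sum_mul]
    rw [Matrix.trace_sum]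
    rw [Finset.sum_comm]
    refine Finset.sum_congr rfl fun i _ => ?_
    rw [Finset.mul_sum, Matrix.trace_sum]
    refine Finset.sum_congr rfl fun i' _ => ?_
    rw [trace_conj_aux']
    simp only [hNdef, conjTranspose_mul, conjTranspose_conjTranspose]
  have Cond : ∀ p q p' q' : Fin d,
      (∑ i, ∑ i', N i i' p p' * star (N i i' q q')) = if p = p' ∧ q = q' then 1 else 0 := by
    intro p q p' q'
    have h := hisoK (single p q 1) (single p' q' 1)
    rw [trace_basis_aux2' p q p' q'] at h
    rw [← h]
    exact Finset.sum_congr rfl fun i _ => Finset.sum_congr rfl fun i' _ =>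
      (trace_basis_aux' p q p' q' (N i i') (N i i')).symm
  -- every N i i' is a scalar multiple of the identity
  have hoff : ∀ (i i' : Fin d × Fin d) (p p' : Fin d), p ≠ p' → N i i' p p' = 0 := by
    intro i i' p p' hpp
    have h := Cond p p p' p'
    rw [if_neg (by tauto)] at h
    exact sum_mul_star_eq_zero'
      (f := fun x : (Fin d × Fin d) × (Fin d × Fin d) => N x.1 x.2 p p')
      (by rw [Fintype.sum_prod_type]; exact h) (i, i')
  have hdiagEq : ∀ (i i' : Fin d × Fin d) (p q : Fin d), N i i' p p = N i i' q q := by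
    intro i i' p q
    have c1 := Cond p p p p
    have c2 := Cond p q p q
    have c3 := Cond q p q p
    have c4 := Cond q q q q
    rw [if_pos ⟨rfl, rfl⟩] at c1 c2 c3 c4
    have key : ∑ x : (Fin d × Fin d) × (Fin d × Fin d),
        (N x.1 x.2 p p - N x.1 x.2 q q) * star (N x.1 x.2 p p - N x.1 x.2 q q) = 0 := by
      rw [Fintype.sum_prod_type]
      simp only [star_sub, sub_mul, mul_sub]
      simp only [Finset.sum_sub_distrib]
      rw [c1, c2, c3, c4]
      ring
    have := sum_mul_star_eq_zero'
      (f := fun x : (Fin d × Fin d) × (Fin d × Fin d) => N x.1 x.2 p p - N x.1 x.2 q q)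
      key (i, i')
    exact sub_eq_zero.mp this
  set c : (Fin d × Fin d) → (Fin d × Fin d) → ℂ := fun i i' => N i i' p₀ p₀ with hcdef
  have hNc : ∀ i i', N i i' = c i i' • (1 : Matrix (Fin d) (Fin d) ℂ) := by
    intro i i'
    ext p p'
    by_cases hpp : p = p'
    · subst hpp
      rw [hdiagEq i i' p p₀]
      simp [Matrix.one_apply, hcdef]
    · rw [hoff i i' p p' hpp]
      simp [Matrix.one_apply, hpp]
  have hstar2 : ∀ i i', c i' i = star (c i i') := by
    intro i i'
    have hct : (N i i')ᴴ = N i' i := by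
      simp only [hNdef, conjTranspose_mul, conjTranspose_conjTranspose]
    calc c i' i = N i' i p₀ p₀ := rfl
      _ = (N i i')ᴴ p₀ p₀ := by rw [hct]
      _ = star (c i i') := by rw [conjTranspose_apply]
  have hR : ∀ i i', c i i' * star (c i i') = c i i * c i' i' := by
    intro i i'
    have e1 : W i' * (W i')ᴴ = c i' i' • 1 := mul_conjT_scalar' (hNc i' i')
    have e2 : (N i i')ᴴ * N i i' = (c i i * c i' i') • (1 : Matrix (Fin d) (Fin d) ℂ) := by
      calc (N i i')ᴴ * N i i' = (W i)ᴴ * (W i' * (W i')ᴴ) * W i := by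
            simp only [hNdef, conjTranspose_mul, conjTranspose_conjTranspose, Matrix.mul_assoc]
        _ = c i' i' • ((W i)ᴴ * W i) := by
            rw [e1]
            simp only [Matrix.mul_smul, Matrix.smul_mul, Matrix.mul_one]
        _ = (c i i * c i' i') • 1 := by
            rw [show (W i)ᴴ * W i = c i i • (1 : Matrix (Fin d) (Fin d) ℂ) from hNc i i,
              smul_smul, mul_comm]
    have e3 : (N i i')ᴴ * N i i' = (star (c i i') * c i i') • (1 : Matrix (Fin d) (Fin d) ℂ) := by
      rw [hNc i i']
      simp [conjTranspose_smul, Matrix.smul_mul, Matrix.mul_smul, smul_smul, mul_comm]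
    have e4 := congrArg (fun M : Matrix (Fin d) (Fin d) ℂ => M p₀ p₀) (e3.symm.trans e2)
    simpa [Matrix.one_apply, mul_comm] using e4
  have hsum1 : ∑ i, ∑ i', c i i' * star (c i i') = 1 := by
    have h := Cond p₀ p₀ p₀ p₀
    rw [if_pos ⟨rfl, rfl⟩] at h
    exact h
  have hex : ∃ i₀, c i₀ i₀ ≠ 0 := by
    by_contra hno
    push_neg at hno
    have hall : ∀ i i', c i i' = 0 := by
      intro i i'
      refine mul_star_self_eq_zero' ?_
      rw [hR i i', hno i, zero_mul]
    rw [Finset.sum_eq_zero (fun i _ => Finset.sum_eq_zero fun i' _ => by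
      rw [hall i i', zero_mul])] at hsum1
    exact zero_ne_one hsum1
  obtain ⟨i₀, hc₀⟩ := hex
  set c₀ : ℂ := c i₀ i₀ with hc₀def
  have hc₀star : star c₀ = c₀ := (hstar2 i₀ i₀).symm
  have hWi : ∀ i, W i = (c i i₀ / c₀) • W i₀ := by
    intro i
    have e1 : (W i)ᴴ * W i = c i i • (1 : Matrix (Fin d) (Fin d) ℂ) := hNc i i
    have e2 : (W i₀)ᴴ * W i = c i i₀ • (1 : Matrix (Fin d) (Fin d) ℂ) := hNc i i₀
    have e3 : (W i)ᴴ * W i₀ = star (c i i₀) • (1 : Matrix (Fin d) (Fin d) ℂ) := by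
      have h := hNc i₀ i
      rw [hstar2 i i₀] at h
      exact h
    have e4 : (W i₀)ᴴ * W i₀ = c₀ • (1 : Matrix (Fin d) (Fin d) ℂ) := hNc i₀ i₀
    have hz : c i i - (c i i₀ / c₀) * star (c i i₀) - star (c i i₀ / c₀) * c i i₀
        + star (c i i₀ / c₀) * (c i i₀ / c₀) * c₀ = 0 := by
      have hr := hR i i₀
      rw [← hc₀def] at hr
      rw [star_div₀, hc₀star]
      simp only [Complex.star_def] at hr ⊢
      field_simp
      linear_combination (-1 : ℂ) * hr
    have hD : (W i - (c i i₀ / c₀) • W i₀)ᴴ * (W i - (c i i₀ / c₀) • W i₀) = 0 := by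
      have expand : (W i - (c i i₀ / c₀) • W i₀)ᴴ * (W i - (c i i₀ / c₀) • W i₀)
          = (c i i - (c i i₀ / c₀) * star (c i i₀) - star (c i i₀ / c₀) * c i i₀
            + star (c i i₀ / c₀) * (c i i₀ / c₀) * c₀) • (1 : Matrix (Fin d) (Fin d) ℂ) := by
        simp only [conjTranspose_sub, conjTranspose_smul, Matrix.sub_mul, Matrix.mul_sub,
          Matrix.smul_mul, Matrix.mul_smul, e1, e2, e3, e4, smul_smul]
        module
      rw [expand, hz, zero_smul]
    exact sub_eq_zero.mp (Matrix.conjTranspose_mul_self_eq_zero.mp hD)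
  -- Λ is a multiple of conjugation by W i₀
  set t : ℂ := ∑ i : Fin d × Fin d, (c i i₀ / c₀) * star (c i i₀ / c₀) with htdef
  have hΛ : ∀ A, Λ A = t • (W i₀ * A * (W i₀)ᴴ) := by
    intro A
    rw [hK A, htdef, Finset.sum_smul]
    refine Finset.sum_congr rfl fun i _ => ?_
    rw [hWi i]
    simp only [Matrix.smul_mul, Matrix.mul_smul, conjTranspose_smul, smul_smul]
    congr 1
    exact mul_comm _ _
  have e5 : W i₀ * (W i₀)ᴴ = c₀ • 1 := mul_conjT_scalar' (hNc i₀ i₀)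
  -- t and c₀ are (coercions of) nonnegative reals
  set T : ℝ := ∑ i : Fin d × Fin d, Complex.normSq (c i i₀ / c₀) with hTdef
  have htreal : t = (T : ℂ) := by
    rw [htdef, hTdef]
    push_cast
    refine Finset.sum_congr rfl fun i _ => ?_
    rw [Complex.star_def, Complex.mul_conj]
  set u : ℝ := ∑ r : Fin d, Complex.normSq (W i₀ r p₀) with hudef
  have hc₀real : c₀ = (u : ℂ) := by
    have h0 : c₀ = ((W i₀)ᴴ * W i₀) p₀ p₀ := rfl
    rw [h0, Matrix.mul_apply, hudef]
    push_cast
    refine Finset.sum_congr rfl fun r _ => ?_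
    rw [conjTranspose_apply]
    simp [mul_comm, Complex.mul_conj]
  -- evaluate the isometry at the identity
  have h11 := hiso 1 1
  rw [hΛ 1, Matrix.mul_one, e5, smul_smul] at h11
  have h12 : star (t * c₀) * (t * c₀) * (d : ℂ) = (d : ℂ) := by
    simp only [conjTranspose_smul, Matrix.smul_mul, Matrix.mul_smul, smul_smul,
      Matrix.trace_smul, Matrix.trace_one, smul_eq_mul, mul_assoc, Matrix.conjTranspose_one,
      Matrix.mul_one, Matrix.one_mul, Fintype.card_fin, Complex.star_def, _root_.map_mul] at h11
    simp only [Complex.star_def, _root_.map_mul]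
    linear_combination h11
  have h13 : star (t * c₀) * (t * c₀) = 1 := by
    have h14 : star (t * c₀) * (t * c₀) * (d : ℂ) = 1 * (d : ℂ) := by
      rw [one_mul]; exact h12
    exact mul_right_cancel₀ hd0 h14
  have htc : t * c₀ = ((T * u : ℝ) : ℂ) := by
    rw [htreal, hc₀real]; push_cast; ring
  have hTu : T * u = 1 := by
    have h15 : (((T * u) * (T * u) : ℝ) : ℂ) = 1 := by
      rw [← h13, htc,
        show star (((T * u : ℝ) : ℂ)) = ((T * u : ℝ) : ℂ) from Complex.conj_ofReal _]
      push_cast; ring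
    have h16 : (T * u) * (T * u) = 1 := by exact_mod_cast h15
    have hTu0 : 0 ≤ T * u := by
      refine mul_nonneg ?_ ?_ <;>
        exact Finset.sum_nonneg fun _ _ => Complex.normSq_nonneg _
    nlinarith
  have hu0 : 0 < u := by
    rcases lt_or_eq_of_le (Finset.sum_nonneg
      fun (r : Fin d) (_ : r ∈ Finset.univ) => Complex.normSq_nonneg (W i₀ r p₀)) with h | h
    · exact h
    · exact absurd (by rw [hc₀real, hudef, ← h]; norm_num : c₀ = 0) hc₀
  have ht : t = ((u⁻¹ : ℝ) : ℂ) := by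
    have hT' : T = u⁻¹ := by
      field_simp
      linarith [hTu]
    rw [htreal, hT']
  -- construct the unitary
  set rr : ℝ := Real.sqrt u with hrrdef
  have hrr2 : rr * rr = u := Real.mul_self_sqrt hu0.le
  have hrr0 : rr ≠ 0 := by positivity
  set V : Matrix (Fin d) (Fin d) ℂ := ((rr⁻¹ : ℝ) : ℂ) • W i₀ with hVdef
  have hVV : Vᴴ * V = 1 := by
    rw [hVdef, conjTranspose_smul, Matrix.smul_mul, Matrix.mul_smul, smul_smul,
      show (W i₀)ᴴ * W i₀ = c₀ • 1 from hNc i₀ i₀, smul_smul, hc₀real]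
    rw [show star (((rr⁻¹ : ℝ)) : ℂ) = ((rr⁻¹ : ℝ) : ℂ) from Complex.conj_ofReal _]
    rw [show ((rr⁻¹ : ℝ) : ℂ) * ((rr⁻¹ : ℝ) : ℂ) * (u : ℂ) = (((rr⁻¹ * rr⁻¹ * u : ℝ)) : ℂ) by push_cast; ring]
    rw [show rr⁻¹ * rr⁻¹ * u = 1 by rw [← hrr2]; field_simp]
    norm_num
  refine ⟨Vᴴ, ?_, ?_⟩
  · rw [Matrix.mem_unitaryGroup_iff']
    rw [Matrix.star_eq_conjTranspose, conjTranspose_conjTranspose]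
    exact mul_eq_one_comm.mp hVV
  · intro A
    rw [conjTranspose_conjTranspose]
    rw [hΛ A, hVdef]
    rw [conjTranspose_smul,
      show star (((rr⁻¹ : ℝ)) : ℂ) = ((rr⁻¹ : ℝ) : ℂ) from Complex.conj_ofReal _]
    simp only [Matrix.smul_mul, Matrix.mul_smul, smul_smul]
    rw [ht]
    congr 1
    rw [← hrr2]
    push_cast [← hrr2]
    field_simp
end
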